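/- Let (γ,ν): I → ℝ² × S¹ be a Legendre curve with γ(t)=(x(t),z(t)), ν(t)=(a(t),b(t)) and curvature (ℓ,β), and let (𝐱,𝐧ˣ,𝐬ˣ) and (𝐳,𝐧ᶻ,𝐬ᶻ) be the associated framed surfaces of revolution around the x-axis and the z-axis. Then (𝐱,𝐧ˣ,𝐬ˣ) and (𝐳,𝐧ᶻ,𝐬ᶻ) are congruent as framed surfaces if and only if z(t) = x(t), ℓ(t) = 0 and a(t) = −b(t) for all t ∈ I; in that case ν is the constant (±1/√2, ∓1/√2) and γ(t) = (c₁ ± ∫ β(t)/√2 dt, c₂ ± ∫ β(t)/√2 dt) with c₁ = c₂. -/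

import Mathlib

open Matrix Real

/-- The framed surfaces of revolution `(𝐱, 𝐧ˣ, 𝐬ˣ)` (around the x-axis)
and `(𝐳, 𝐧ᶻ, 𝐬ᶻ)` (around the z-axis) of a Legendre curve `(γ, ν)` are congruent as
framed surfaces iff `z = x`, `ℓ = 0` and `a = -b` on `I`; in that case `ν` is the constant
`(±1/√2, ∓1/√2)` and `γ(t) = (c₁ ± ∫ β/√2, c₂ ± ∫ β/√2)` with `c₁ = c₂`. -/
theorem surfaces_of_revolution_congruent_iff
    (x z a b ℓ β : ℝ → ℝ)
    (hx : ContDiff ℝ (⊤ : ℕ∞) x) (hz : ContDiff ℝ (⊤ : ℕ∞) z)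
    (ha : ContDiff ℝ (⊤ : ℕ∞) a) (hb : ContDiff ℝ (⊤ : ℕ∞) b)
    (hβ : ContDiff ℝ (⊤ : ℕ∞) β)
    (hunit : ∀ t, a t ^ 2 + b t ^ 2 = 1)
    (hdx : ∀ t, deriv x t = -(β t) * b t)
    (hdz : ∀ t, deriv z t = β t * a t)
    (hda : ∀ t, deriv a t = -(ℓ t) * b t)
    (hdb : ∀ t, deriv b t = ℓ t * a t)
    (X Nx Sx Z Nz Sz : ℝ → ℝ → Fin 3 → ℝ)
    (hX : ∀ t θ, X t θ = ![x t, z t * cos θ, z t * sin θ])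
    (hNx : ∀ t θ, Nx t θ = ![-(a t), -(b t) * cos θ, -(b t) * sin θ])
    (hSx : ∀ t θ, Sx t θ = ![0, sin θ, -cos θ])
    (hZ : ∀ t θ, Z t θ = ![x t * cos θ, x t * sin θ, z t])
    (hNz : ∀ t θ, Nz t θ = ![a t * cos θ, a t * sin θ, b t])
    (hSz : ∀ t θ, Sz t θ = ![sin θ, -cos θ, 0]) :
    -- congruence as framed surfaces iff z = x, ℓ = 0, a = -b
    ((∃ (A : Matrix (Fin 3) (Fin 3) ℝ) (v : Fin 3 → ℝ),
        A.transpose * A = 1 ∧ A.det = 1 ∧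
        ∀ t θ : ℝ, Z t θ = A.mulVec (X t θ) + v ∧
          Nz t θ = A.mulVec (Nx t θ) ∧ Sz t θ = A.mulVec (Sx t θ)) ↔
      (∀ t : ℝ, z t = x t ∧ ℓ t = 0 ∧ a t = -(b t))) ∧
    -- in that case, ν = (±1/√2, ∓1/√2) is constant and
    -- γ(t) = (c ± ∫ β/√2, c ± ∫ β/√2)
    ((∀ t : ℝ, z t = x t ∧ ℓ t = 0 ∧ a t = -(b t)) →
      ∃ ε : ℝ, (ε = 1 ∨ ε = -1) ∧
        (∀ t : ℝ, a t = ε / Real.sqrt 2 ∧ b t = -(ε / Real.sqrt 2)) ∧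
        ∀ t₀ t : ℝ, x t₀ = z t₀ ∧
          x t = x t₀ + ε * ∫ s in t₀..t, β s / Real.sqrt 2 ∧
          z t = z t₀ + ε * ∫ s in t₀..t, β s / Real.sqrt 2) := by
    -- b is never zero when a = -b
  have hbne : ∀ t, a t = -(b t) → b t ≠ 0 := by
    intro t hab hb0
    have := hunit t
    rw [hab, hb0] at this
    norm_num at this
  constructor
  · constructor
    · rintro ⟨A, v, hO, hd, h⟩
      -- A 0 1 = 1
      have hA01 : A 0 1 = 1 := by
        have h1 := congrFun ((h 0 (π/2)).2.2) 0
        simp [hSz, hSx, Matrix.mulVec, dotProduct, Fin.sum_univ_three] at h1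
        linarith
      have haab : ∀ t, a t = -(b t) := by
        intro t
        have h1 := congrFun ((h t 0).2.1) 0
        have h2 := congrFun ((h t π).2.1) 0
        simp [hNz, hNx, Matrix.mulVec, dotProduct, Fin.sum_univ_three, hA01] at h1 h2
        linarith
      have hzx : ∀ t, z t = x t := by
        intro t
        have h1 := congrFun ((h t 0).1) 0
        have h2 := congrFun ((h t π).1) 0
        simp [hZ, hX, Matrix.mulVec, dotProduct, Fin.sum_univ_three, hA01] at h1 h2
        linarith
      intro t
      refine ⟨hzx t, ?_, haab t⟩
      have hfun : a = fun s => -(b s) := funext haab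
      have hder : deriv a t = -(deriv b t) := by
        rw [hfun]
        exact deriv.neg
      rw [hda t, hdb t, haab t] at hder
      have hb0 := hbne t (haab t)
      have : ℓ t * b t = 0 := by nlinarith [hder]
      rcases mul_eq_zero.1 this with h' | h'
      · exact h'
      · exact absurd h' hb0
    · intro hc
      refine ⟨!![0,1,0;0,0,1;1,0,0], 0, ?_, ?_, ?_⟩
      · ext i j
        fin_cases i <;> fin_cases j <;>
          simp [Matrix.mul_apply, Fin.sum_univ_three, Matrix.one_apply,
            Matrix.transpose_apply, Matrix.vecHead, Matrix.vecTail]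
      · simp [Matrix.det_fin_three]
      · intro t θ
        obtain ⟨h1, -, h3⟩ := hc t
        refine ⟨?_, ?_, ?_⟩ <;> funext i <;> fin_cases i <;>
          simp [hZ, hX, hNz, hNx, hSz, hSx, Matrix.mulVec, dotProduct,
            Fin.sum_univ_three, h1, h3] <;> ring
  · intro hc
    have hab : ∀ t, a t = -(b t) := fun t => (hc t).2.2
    have ha2 : ∀ t, a t ^ 2 = 1/2 := by
      intro t
      have := hunit t
      rw [hab t] at this ⊢
      nlinarith
    have hane : ∀ t, a t ≠ 0 := by
      intro t h0
      have := ha2 t; rw [h0] at this; norm_num at this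
    have hsq2 : Real.sqrt 2 > 0 := by positivity
    -- a is constant equal to a 0
    have haconst : ∀ t, a t = a 0 := by
      intro t
      by_contra hne
      have hmem : (0:ℝ) ∈ Set.uIcc (a 0) (a t) := by
        have h1 := ha2 t
        have h2 := ha2 0
        have : (a t - a 0) * (a t + a 0) = 0 := by nlinarith
        rcases mul_eq_zero.1 this with h' | h'
        · exact absurd (by linarith) hne
        · have hat : a t = -(a 0) := by linarith
          rcases lt_or_gt_of_ne (hane 0) with h0 | h0
          · exact Set.mem_uIcc.2 (Or.inl ⟨by linarith, by linarith⟩)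
          · exact Set.mem_uIcc.2 (Or.inr ⟨by linarith, by linarith⟩)
      obtain ⟨s, -, hs⟩ :=
        intermediate_value_uIcc (ha.continuous.continuousOn (s := Set.uIcc 0 t)) hmem
      exact hane s hs
    have hbval : ∀ s, b s = -(a 0) := by
      intro s
      have h1 := hab s
      have h2 := haconst s
      linarith
    refine ⟨Real.sqrt 2 * a 0, ?_, ?_, ?_⟩
    · rw [← mul_self_eq_one_iff]
      have := ha2 0
      have h2 : Real.sqrt 2 * Real.sqrt 2 = 2 := Real.mul_self_sqrt (by norm_num)
      nlinarith
    · intro t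
      have h1 : a t = Real.sqrt 2 * a 0 / Real.sqrt 2 := by
        rw [haconst t]; field_simp
      refine ⟨h1, ?_⟩
      rw [hbval t, ← h1, haconst t]
    · intro t₀ t
      have hderx : ∀ s, deriv x s = Real.sqrt 2 * a 0 * (β s / Real.sqrt 2) := by
        intro s
        rw [hdx s, hbval s]
        field_simp
      have hxeq : x t = x t₀ + Real.sqrt 2 * a 0 * ∫ s in t₀..t, β s / Real.sqrt 2 := by
        have hint : ∫ s in t₀..t, deriv x s = x t - x t₀ := by
          apply intervalIntegral.integral_deriv_eq_sub
          · intro s _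
            exact (hx.differentiable (by simp)).differentiableAt
          · exact (hx.continuous_deriv (by exact_mod_cast le_top)).intervalIntegrable _ _
        have hint2 : ∫ s in t₀..t, deriv x s
            = Real.sqrt 2 * a 0 * ∫ s in t₀..t, β s / Real.sqrt 2 := by
          rw [← intervalIntegral.integral_const_mul]
          exact intervalIntegral.integral_congr fun s _ => hderx s
        linarith [hint, hint2]
      refine ⟨((hc t₀).1).symm, hxeq, ?_⟩
      rw [(hc t).1, (hc t₀).1]
      exact hxeq
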